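/- Let k ≥ 1 and let φ, ψ be ring automorphisms of the formal power series ring ℂ[[x,y]] (induced by biholomorphic germs fixing 0). If φ(f) ≡ f mod 𝔪² for all f and ψ(f) ≡ f mod 𝔪ᵏ for all f, where 𝔪 = (x,y) is the maximal ideal, then the commutator automorphism φ⁻¹∘ψ⁻¹∘φ∘ψ satisfies (φ⁻¹∘ψ⁻¹∘φ∘ψ)(f) ≡ f mod 𝔪ᵏ⁺¹ for all f ∈ ℂ[[x,y]]. -/
import Mathlib

lemma key_lemma {R : Type*} [CommRing R] (α : R ≃+* R) (m : Ideal R) (a : ℕ) (ha : 1 ≤ a)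
    (hα : ∀ f, α f - f ∈ m ^ a) :
    ∀ b : ℕ, ∀ h ∈ m ^ (b + 1), α h - h ∈ m ^ (a + b) := by
  intro b
  induction b with
  | zero => intro h _; simpa using hα h
  | succ b ih =>
    intro h hh
    rw [pow_succ'] at hh
    refine Submodule.mul_induction_on hh ?_ ?_
    · intro u hu v hv
      have h1 : α u ∈ m := by
        have h2 : (α u - u) + u ∈ m :=
          add_mem (Ideal.pow_le_self (by omega) (hα u)) hu
        simpa using h2
      have h2 : α v - v ∈ m ^ (a + b) := ih v hv
      have hkey : α (u * v) - u * v = α u * (α v - v) + (α u - u) * v := by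
        rw [map_mul]; ring
      rw [hkey, show a + (b + 1) = (a + b) + 1 by omega]
      refine add_mem ?_ ?_
      · rw [pow_succ']
        exact Ideal.mul_mem_mul h1 h2
      · rw [show (a + b) + 1 = a + (b + 1) by omega, pow_add]
        exact Ideal.mul_mem_mul (hα u) hv
    · intro x y hx hy
      have : α (x + y) - (x + y) = (α x - x) + (α y - y) := by
        rw [map_add]; ring
      rw [this]; exact add_mem hx hy

/-- commutator of automorphisms of ℂ[[x,y]] congruent to id mod 𝔪² and 𝔪ᵏ
is congruent to id mod 𝔪ᵏ⁺¹. -/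
theorem stmt_0 (k : ℕ) (hk : 1 ≤ k)
    (φ ψ : MvPowerSeries (Fin 2) ℂ ≃+* MvPowerSeries (Fin 2) ℂ)
    (m : Ideal (MvPowerSeries (Fin 2) ℂ))
    (hm : m = Ideal.span {MvPowerSeries.X 0, MvPowerSeries.X 1})
    (hφ : ∀ f, φ f - f ∈ m ^ 2)
    (hψ : ∀ f, ψ f - f ∈ m ^ k) :
    ∀ f, φ.symm (ψ.symm (φ (ψ f))) - f ∈ m ^ (k + 1) := by
  -- inverses satisfy the same congruences
  have hφ' : ∀ g, φ.symm g - g ∈ m ^ 2 := by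
    intro g
    have h := hφ (φ.symm g)
    rw [RingEquiv.apply_symm_apply] at h
    simpa using neg_mem h
  have hψ' : ∀ g, ψ.symm g - g ∈ m ^ k := by
    intro g
    have h := hψ (ψ.symm g)
    rw [RingEquiv.apply_symm_apply] at h
    simpa using neg_mem h
  intro f
  -- core: φ ψ f - ψ φ f ∈ m ^ (k+1)
  have h1 : φ (ψ f) - ψ f - (φ f - f) ∈ m ^ (k + 1) := by
    have he : φ (ψ f) - ψ f - (φ f - f) = φ (ψ f - f) - (ψ f - f) := by
      rw [map_sub]; ring
    have hmem : ψ f - f ∈ m ^ ((k - 1) + 1) := by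
      rw [Nat.sub_add_cancel hk]; exact hψ f
    have := key_lemma φ m 2 (by omega) hφ (k - 1) (ψ f - f) hmem
    rw [he, show k + 1 = 2 + (k - 1) by omega]
    exact this
  have h2 : ψ (φ f) - φ f - (ψ f - f) ∈ m ^ (k + 1) := by
    have he : ψ (φ f) - φ f - (ψ f - f) = ψ (φ f - f) - (φ f - f) := by
      rw [map_sub]; ring
    have hmem : φ f - f ∈ m ^ (1 + 1) := by simpa using hφ f
    have := key_lemma ψ m k hk hψ 1 (φ f - f) hmem
    rw [he]; exact this
  have core : φ (ψ f) - ψ (φ f) ∈ m ^ (k + 1) := by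
    have he : φ (ψ f) - ψ (φ f) =
        (φ (ψ f) - ψ f - (φ f - f)) - (ψ (φ f) - φ f - (ψ f - f)) := by ring
    rw [he]; exact sub_mem h1 h2
  -- now push through the inverses
  set g := φ (ψ f) - ψ (φ f) with hg
  have hstep1 : ψ.symm (φ (ψ f)) = ψ.symm g + φ f := by
    have : φ (ψ f) = g + ψ (φ f) := by rw [hg]; ring
    rw [this, map_add, RingEquiv.symm_apply_apply]
  have hstep2 : φ.symm (ψ.symm (φ (ψ f))) - f = φ.symm (ψ.symm g) := by
    rw [hstep1, map_add, RingEquiv.symm_apply_apply]; ring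
  rw [hstep2]
  -- ψ.symm g ∈ m^(k+1)
  have hψg : ψ.symm g ∈ m ^ (k + 1) := by
    have hd := key_lemma ψ.symm m k hk hψ' k g core
    have hle : m ^ (k + k) ≤ m ^ (k + 1) := Ideal.pow_le_pow_right (by omega)
    have : (ψ.symm g - g) + g ∈ m ^ (k + 1) := add_mem (hle hd) core
    simpa using this
  have hd := key_lemma φ.symm m 2 (by omega) hφ' k (ψ.symm g) hψg
  have hle : m ^ (2 + k) ≤ m ^ (k + 1) := Ideal.pow_le_pow_right (by omega)
  have : (φ.symm (ψ.symm g) - ψ.symm g) + ψ.symm g ∈ m ^ (k + 1) :=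
    add_mem (hle hd) hψg
  simpa using this
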